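/- Let (M,d) be a locally compact ultrametric space that is not discrete, and R a nontrivial commutative ring. Then the Egorov algebra G(M,R) does not admit a standard point value characterization: there exists f ∈ G(M,R) with f ≠ 0 but f(x) = 0 in the ring of generalized numbers R̃ := R^ℕ/∼ for every x ∈ M. -/

import Mathlib

open Metric Set

/-- Let `(M,d)` be a locally compact ultrametric space which is not discrete and
`R` a nontrivial commutative ring. Then the Egorov algebra `G(M,R)` does not
admit a standard point value characterization: there is a sequence `f` of
locally constant compactly supported functions which is not negligible (so
`[f] ≠ 0` in `G(M,R)`) but whose value sequence at each standard point `x ∈ M`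
is eventually zero (so `[f](x) = 0` in `R̃ = Rℕ/∼`). -/
theorem egorov_no_standard_point_value_characterization
    {M : Type*} [MetricSpace M] [IsUltrametricDist M] [LocallyCompactSpace M]
    (hM : ¬ DiscreteTopology M)
    (R : Type*) [CommRing R] [Nontrivial R] :
    ∃ f : ℕ → M → R,
      (∀ k, IsLocallyConstant (f k) ∧ HasCompactSupport (f k)) ∧
      (¬ ∀ K : Set M, IsCompact K → ∃ N : ℕ, ∀ k ≥ N, ∀ x ∈ K, f k x = 0) ∧
      (∀ x : M, ∃ N : ℕ, ∀ k ≥ N, f k x = 0) := by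
  -- Find an accumulation point `x₀`.
  have hne : ¬ ∀ x : M, IsOpen ({x} : Set M) := fun h =>
    hM (discreteTopology_iff_isOpen_singleton.mpr h)
  push_neg at hne
  obtain ⟨x₀, hx₀⟩ := hne
  have hacc : ∀ δ > (0:ℝ), ∃ y : M, y ≠ x₀ ∧ dist y x₀ < δ := by
    intro δ hδ
    by_contra h
    push_neg at h
    exact hx₀ (Metric.isOpen_singleton_iff.mpr
      ⟨δ, hδ, fun y hy => by_contra fun hne => absurd hy (not_lt.mpr (h y hne))⟩)
  -- A compact neighborhood of `x₀`.
  obtain ⟨K₀, hK₀c, hK₀n⟩ := exists_compact_mem_nhds x₀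
  obtain ⟨ε, hε, hballε⟩ := Metric.mem_nhds_iff.mp hK₀n
  -- A sequence of distinct points approaching `x₀` with strictly decreasing distances.
  have step : ∀ s : {y : M // y ≠ x₀ ∧ dist y x₀ < ε},
      ∃ t : {y : M // y ≠ x₀ ∧ dist y x₀ < ε}, dist t.1 x₀ < dist s.1 x₀ := by
    rintro ⟨s, hs, hsd⟩
    obtain ⟨y, hy, hyd⟩ := hacc (dist s x₀) (dist_pos.mpr hs)
    exact ⟨⟨y, hy, hyd.trans hsd⟩, hyd⟩
  choose F hF using step
  obtain ⟨y0, hy0, hy0d⟩ := hacc ε hε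
  set s0 : {y : M // y ≠ x₀ ∧ dist y x₀ < ε} := ⟨y0, hy0, hy0d⟩ with hs0
  set xs : ℕ → M := fun n => (F^[n] s0).1 with hxs
  set dd : ℕ → ℝ := fun n => dist (xs n) x₀ with hdd
  have hdpos : ∀ n, 0 < dd n := fun n => dist_pos.mpr (F^[n] s0).2.1
  have hanti : StrictAnti dd := by
    apply strictAnti_nat_of_succ_lt
    intro n
    have hit : F^[n+1] s0 = F (F^[n] s0) := Function.iterate_succ_apply' F n s0
    simpa [dd, xs, hit] using hF (F^[n] s0)
  have hxε : ∀ n, dist (xs n) x₀ < ε := fun n => (F^[n] s0).2.2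
  -- Choose small compact clopen balls around the `xs k`.
  have hcomp : ∀ k : ℕ, ∃ r : ℝ, 0 < r ∧ r ≤ dd k / 2 ∧ IsCompact (ball (xs k) r) := by
    intro k
    obtain ⟨K, hKc, hKn⟩ := exists_compact_mem_nhds (xs k)
    obtain ⟨δ, hδ, hδb⟩ := Metric.mem_nhds_iff.mp hKn
    refine ⟨min δ (dd k / 2), lt_min hδ (by linarith [hdpos k]), min_le_right _ _, ?_⟩
    refine hKc.of_isClosed_subset (IsUltrametricDist.isClosed_ball _ _) ?_
    exact (ball_subset_ball (min_le_left _ _)).trans hδb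
  choose r hr0 hr2 hrc using hcomp
  -- The balls are pairwise disjoint.
  have hdisj : ∀ j k : ℕ, j < k → ∀ y, y ∈ ball (xs j) (r j) → y ∉ ball (xs k) (r k) := by
    intro j k hjk y hyj hyk
    rw [mem_ball] at hyj hyk
    have hdk : dd k < dd j := hanti hjk
    have h1 : dist (xs j) (xs k) ≤ max (dist (xs j) y) (dist y (xs k)) :=
      IsUltrametricDist.dist_triangle_max _ _ _
    have h2 : dist (xs j) y < dd j / 2 := by
      rw [dist_comm]; exact hyj.trans_le (hr2 j)
    have h3 : dist y (xs k) < dd j / 2 := by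
      refine hyk.trans_le ((hr2 k).trans ?_); linarith
    have h4 : dist (xs j) (xs k) < dd j / 2 := h1.trans_lt (max_lt h2 h3)
    have h5 : dd j ≤ max (dist (xs j) (xs k)) (dist (xs k) x₀) :=
      IsUltrametricDist.dist_triangle_max _ _ _
    have h6 : dist (xs k) x₀ = dd k := rfl
    rcases le_max_iff.mp h5 with h | h
    · linarith [hdpos j]
    · rw [h6] at h; linarith
  -- The counterexample sequence.
  refine ⟨fun k => (ball (xs k) (r k)).indicator (fun _ => (1:R)), fun k => ⟨?_, ?_⟩, ?_, ?_⟩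
  · -- locally constant
    rw [IsLocallyConstant.iff_exists_open]
    intro y
    by_cases hy : y ∈ ball (xs k) (r k)
    · exact ⟨ball (xs k) (r k), isOpen_ball, hy,
        fun z hz => by simp [indicator_of_mem, hz, hy]⟩
    · exact ⟨(ball (xs k) (r k))ᶜ, (IsUltrametricDist.isClosed_ball _ _).isOpen_compl, hy,
        fun z hz => by
          show (ball (xs k) (r k)).indicator (fun _ => (1:R)) z
              = (ball (xs k) (r k)).indicator (fun _ => (1:R)) y
          rw [indicator_of_notMem hz, indicator_of_notMem hy]⟩
  · -- compact support
    exact HasCompactSupport.intro (hrc k) fun y hy => indicator_of_notMem hy _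
  · -- not negligible
    intro h
    obtain ⟨N, hN⟩ := h K₀ hK₀c
    have hxK : xs N ∈ K₀ := hballε (mem_ball.mpr (hxε N))
    have h1 : (ball (xs N) (r N)).indicator (fun _ => (1:R)) (xs N) = 0 :=
      hN N le_rfl (xs N) hxK
    rw [indicator_of_mem (mem_ball_self (hr0 N))] at h1
    exact one_ne_zero h1
  · -- vanishing point values
    intro y
    by_cases hy : ∃ j, y ∈ ball (xs j) (r j)
    · obtain ⟨j, hj⟩ := hy
      refine ⟨j + 1, fun k hk => indicator_of_notMem (hdisj j k (by omega) y hj) _⟩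
    · push_neg at hy
      exact ⟨0, fun k _ => indicator_of_notMem (hy k) _⟩
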